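/- Let G be a finite nilpotent group of nilpotency class at most 2. Then G admits a left brace structure, i.e. there is an abelian group operation + on G with a(b+c) = ab − a + ac for all a,b,c ∈ G (equivalently, G is an IYB-group). -/

import Mathlib

open scoped commutatorElement
open scoped IsMulCommutative

section Pairing

/-- On a finite abelian group, any "alternating bilinear" pairing is the
antisymmetrization of some bilinear pairing. -/
theorem exists_pairing {V : Type*} [grp : Group V] [Finite V] {C : Type*} [CommGroup C]
    (hcomm : ∀ x y : V, x * y = y * x) (ω : V → V → C)
    (ωmul1 : ∀ x y z : V, ω (x * y) z = ω x z * ω y z)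
    (ωmul2 : ∀ x y z : V, ω x (y * z) = ω x y * ω x z)
    (ωanti : ∀ x y : V, (ω x y)⁻¹ = ω y x)
    (ωself : ∀ x : V, ω x x = 1) :
    ∃ P : V → V → C,
      (∀ x y z : V, P (x * y) z = P x z * P y z) ∧
      (∀ x y z : V, P x (y * z) = P x y * P x z) ∧
      (∀ x y : V, P x y = ω x y * P y x) := by
  classical
  obtain ⟨ι, hι, n, hn, ⟨e⟩⟩ :=
    @CommGroup.equiv_prod_multiplicative_zmod_of_finite V { grp with mul_comm := hcomm } _
  let Ω : (∀ i, Multiplicative (ZMod (n i))) → (∀ i, Multiplicative (ZMod (n i))) → C :=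
    fun u v => ω (e.symm u) (e.symm v)
  have Ωmul1 : ∀ u u' v, Ω (u * u') v = Ω u v * Ω u' v := by
    intro u u' v; show ω (e.symm (u * u')) _ = _
    rw [map_mul]; exact ωmul1 _ _ _
  have Ωmul2 : ∀ u v v', Ω u (v * v') = Ω u v * Ω u v' := by
    intro u v v'; show ω _ (e.symm (v * v')) = _
    rw [map_mul]; exact ωmul2 _ _ _
  have Ωanti : ∀ u v, (Ω u v)⁻¹ = Ω v u := fun u v => ωanti _ _
  have Ωself : ∀ u, Ω u u = 1 := fun u => ωself _
  have Ωone1 : ∀ v, Ω 1 v = 1 := by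
    intro v
    have h := Ωmul1 1 1 v
    rw [one_mul] at h
    exact left_eq_mul.mp h
  have Ωone2 : ∀ u, Ω u 1 = 1 := by
    intro u
    have h := Ωmul2 u 1 1
    rw [one_mul] at h
    exact left_eq_mul.mp h
  have Ωpow1 : ∀ u v (k : ℕ), Ω (u ^ k) v = (Ω u v) ^ k := by
    intro u v k
    induction k with
    | zero => rw [pow_zero, pow_zero]; exact Ωone1 v
    | succ m ih => rw [pow_succ, pow_succ, Ωmul1, ih]
  have Ωpow2 : ∀ u v (k : ℕ), Ω u (v ^ k) = (Ω u v) ^ k := by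
    intro u v k
    induction k with
    | zero => rw [pow_zero, pow_zero]; exact Ωone2 u
    | succ m ih => rw [pow_succ, pow_succ, Ωmul2, ih]
  have Ωdiag : ∀ (i : ι) (s t : Multiplicative (ZMod (n i))),
      Ω (Pi.mulSingle i s) (Pi.mulSingle i t) = 1 := by
    intro i s t
    haveI : NeZero (n i) := ⟨by have := hn i; omega⟩
    set g : Multiplicative (ZMod (n i)) := Multiplicative.ofAdd 1 with hg
    have hpow : ∀ w : Multiplicative (ZMod (n i)), w = g ^ (w.toAdd.val) := by
      intro w
      apply Multiplicative.toAdd.injective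
      show w.toAdd = (g ^ (w.toAdd.val)).toAdd
      rw [toAdd_pow]
      show w.toAdd = (w.toAdd.val) • (1 : ZMod (n i))
      rw [nsmul_eq_mul, mul_one]
      exact (ZMod.natCast_rightInverse w.toAdd).symm
    rw [hpow s, hpow t, Pi.mulSingle_pow, Pi.mulSingle_pow, Ωpow1, Ωpow2, Ωself,
      one_pow, one_pow]
  -- the triangular pairing
  set σ : ι ≃ Fin (Fintype.card ι) := Fintype.equivFin ι with hσ
  let B : (∀ i, Multiplicative (ZMod (n i))) → (∀ i, Multiplicative (ZMod (n i))) → C :=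
    fun u v => ∏ i : ι, ∏ j : ι,
      if σ i < σ j then Ω (Pi.mulSingle i (u i)) (Pi.mulSingle j (v j)) else 1
  have Bmul1 : ∀ u u' v, B (u * u') v = B u v * B u' v := by
    intro u u' v
    show (∏ i : ι, ∏ j : ι, _) = (∏ i : ι, ∏ j : ι, _) * (∏ i : ι, ∏ j : ι, _)
    rw [← Finset.prod_mul_distrib]
    refine Finset.prod_congr rfl fun i _ => ?_
    rw [← Finset.prod_mul_distrib]
    refine Finset.prod_congr rfl fun j _ => ?_
    by_cases h : σ i < σ j
    · rw [if_pos h, if_pos h, if_pos h,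
        show (u * u') i = u i * u' i from rfl, Pi.mulSingle_mul, Ωmul1]
    · rw [if_neg h, if_neg h, if_neg h, mul_one]
  have Bmul2 : ∀ u v v', B u (v * v') = B u v * B u v' := by
    intro u v v'
    show (∏ i : ι, ∏ j : ι, _) = (∏ i : ι, ∏ j : ι, _) * (∏ i : ι, ∏ j : ι, _)
    rw [← Finset.prod_mul_distrib]
    refine Finset.prod_congr rfl fun i _ => ?_
    rw [← Finset.prod_mul_distrib]
    refine Finset.prod_congr rfl fun j _ => ?_
    by_cases h : σ i < σ j
    · rw [if_pos h, if_pos h, if_pos h,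
        show (v * v') j = v j * v' j from rfl, Pi.mulSingle_mul, Ωmul2]
    · rw [if_neg h, if_neg h, if_neg h, mul_one]
  have hsingle : ∀ u : (∀ i, Multiplicative (ZMod (n i))),
      ∏ i : ι, Pi.mulSingle i (u i) = u := fun u => Finset.univ_prod_mulSingle u
  have Ωexpand : ∀ u v : (∀ i, Multiplicative (ZMod (n i))),
      Ω u v = ∏ i : ι, ∏ j : ι, Ω (Pi.mulSingle i (u i)) (Pi.mulSingle j (v j)) := by
    intro u v
    have h1 : ∀ w, Ω u w = ∏ i : ι, Ω (Pi.mulSingle i (u i)) w := by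
      intro w
      let F : (∀ i, Multiplicative (ZMod (n i))) →* C :=
        MonoidHom.mk' (fun x => Ω x w) (fun a b => Ωmul1 a b w)
      calc Ω u w = F (∏ i : ι, Pi.mulSingle i (u i)) := by rw [hsingle]; rfl
        _ = ∏ i : ι, F (Pi.mulSingle i (u i)) := map_prod F _ _
    rw [h1 v]
    refine Finset.prod_congr rfl fun i _ => ?_
    let F2 : (∀ i, Multiplicative (ZMod (n i))) →* C :=
      MonoidHom.mk' (fun y => Ω (Pi.mulSingle i (u i)) y) (fun a b => Ωmul2 _ a b)
    calc Ω (Pi.mulSingle i (u i)) v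
        = F2 (∏ j : ι, Pi.mulSingle j (v j)) := by rw [hsingle]; rfl
      _ = ∏ j : ι, F2 (Pi.mulSingle j (v j)) := map_prod F2 _ _
  have BL3 : ∀ u v, B u v = Ω u v * B v u := by
    intro u v
    have key : ∀ i j : ι, Ω (Pi.mulSingle i (u i)) (Pi.mulSingle j (v j)) =
        (if σ i < σ j then Ω (Pi.mulSingle i (u i)) (Pi.mulSingle j (v j)) else 1) *
        (if σ j < σ i then Ω (Pi.mulSingle j (v j)) (Pi.mulSingle i (u i)) else 1)⁻¹ := by
      intro i j
      rcases lt_trichotomy (σ i) (σ j) with h | h | h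
      · rw [if_pos h, if_neg (asymm h), inv_one, mul_one]
      · have hij : i = j := σ.injective h
        subst hij
        rw [if_neg (lt_irrefl _), if_neg (lt_irrefl _), Ωdiag, inv_one, mul_one]
      · rw [if_neg (asymm h), if_pos h, one_mul, Ωanti]
    have hswap : B v u = ∏ i : ι, ∏ j : ι,
        (if σ j < σ i then Ω (Pi.mulSingle j (v j)) (Pi.mulSingle i (u i)) else 1) :=
      Finset.prod_comm
    have h2 : Ω u v = B u v * (B v u)⁻¹ := by
      rw [Ωexpand u v, hswap]
      show _ = (∏ i : ι, ∏ j : ι, _) * (∏ i : ι, ∏ j : ι, _)⁻¹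
      rw [← Finset.prod_inv_distrib, ← Finset.prod_mul_distrib]
      refine Finset.prod_congr rfl fun i _ => ?_
      rw [← Finset.prod_inv_distrib, ← Finset.prod_mul_distrib]
      exact Finset.prod_congr rfl fun j _ => key i j
    rw [h2]
    group
  refine ⟨fun x y => B (e x) (e y), ?_, ?_, ?_⟩
  · intro x y z
    show B (e (x * y)) (e z) = B (e x) (e z) * B (e y) (e z)
    rw [map_mul, Bmul1]
  · intro x y z
    show B (e x) (e (y * z)) = B (e x) (e y) * B (e x) (e z)
    rw [map_mul, Bmul2]
  · intro x y
    show B (e x) (e y) = ω x y * B (e y) (e x)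
    have h := BL3 (e x) (e y)
    have hΩ : Ω (e x) (e y) = ω x y := by
      show ω (e.symm (e x)) (e.symm (e y)) = ω x y
      rw [MulEquiv.symm_apply_apply, MulEquiv.symm_apply_apply]
    rw [h, hΩ]

end Pairing
section Beta

variable {G : Type*} [Group G]

lemma comm_mul_second (hG : ∀ a b : G, ⁅a, b⁆ ∈ Subgroup.center G) (a b c : G) :
    ⁅a, b * c⁆ = ⁅a, b⁆ * ⁅a, c⁆ := by
  have conj : b * ⁅a, c⁆ * b⁻¹ = ⁅a, c⁆ := by
    rw [Subgroup.mem_center_iff.mp (hG a c) b, mul_inv_cancel_right]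
  calc ⁅a, b * c⁆ = ⁅a, b⁆ * (b * ⁅a, c⁆ * b⁻¹) := by group
    _ = ⁅a, b⁆ * ⁅a, c⁆ := by rw [conj]

lemma comm_mul_first (hG : ∀ a b : G, ⁅a, b⁆ ∈ Subgroup.center G) (a b c : G) :
    ⁅a * b, c⁆ = ⁅a, c⁆ * ⁅b, c⁆ := by
  have conj : a * ⁅b, c⁆ * a⁻¹ = ⁅b, c⁆ := by
    rw [Subgroup.mem_center_iff.mp (hG b c) a, mul_inv_cancel_right]
  calc ⁅a * b, c⁆ = (a * ⁅b, c⁆ * a⁻¹) * ⁅a, c⁆ := by group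
    _ = ⁅b, c⁆ * ⁅a, c⁆ := by rw [conj]
    _ = ⁅a, c⁆ * ⁅b, c⁆ := Subgroup.mem_center_iff.mp (hG a c) ⁅b, c⁆

lemma comm_central_second {z : G} (hz : z ∈ Subgroup.center G) (a b : G) :
    ⁅a, b * z⁆ = ⁅a, b⁆ := by
  have h1 : ∀ g : G, g * z = z * g := Subgroup.mem_center_iff.mp hz
  calc ⁅a, b * z⁆ = a * (b * z) * a⁻¹ * (b * z)⁻¹ := commutatorElement_def _ _
    _ = a * b * (z * a⁻¹) * z⁻¹ * b⁻¹ := by group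
    _ = a * b * (a⁻¹ * z) * z⁻¹ * b⁻¹ := by rw [← h1]
    _ = ⁅a, b⁆ := by group

lemma comm_central_first {z : G} (hz : z ∈ Subgroup.center G) (a b : G) :
    ⁅a * z, b⁆ = ⁅a, b⁆ := by
  have h1 : ∀ g : G, g * z = z * g := Subgroup.mem_center_iff.mp hz
  calc ⁅a * z, b⁆ = a * (z * b) * z⁻¹ * a⁻¹ * b⁻¹ := by
        rw [commutatorElement_def]; group
    _ = a * (b * z) * z⁻¹ * a⁻¹ * b⁻¹ := by rw [h1]
    _ = ⁅a, b⁆ := by rw [commutatorElement_def]; group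

/-- Well-definedness of the commutator pairing modulo the center. -/
lemma comm_well {a a' b b' : G}
    (ha : a⁻¹ * a' ∈ Subgroup.center G) (hb : b⁻¹ * b' ∈ Subgroup.center G) :
    ⁅a, b⁆ = ⁅a', b'⁆ := by
  have ha' : a' = a * (a⁻¹ * a') := by group
  have hb' : b' = b * (b⁻¹ * b') := by group
  rw [ha', hb', comm_central_first ha, comm_central_second hb]

/-- Existence of a "bilinear" central pairing whose antisymmetrization is the
commutator. -/
theorem exists_beta [Finite G] (hG : ∀ a b : G, ⁅a, b⁆ ∈ Subgroup.center G) :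
    ∃ β : G → G → Subgroup.center G,
      (∀ a b c : G, β (a * b) c = β a c * β b c) ∧
      (∀ a b c : G, β a (b * c) = β a b * β a c) ∧
      (∀ a b : G, a ∈ Subgroup.center G → β a b = 1) ∧
      (∀ a b : G, b ∈ Subgroup.center G → β a b = 1) ∧
      (∀ a b : G, (β a b : G) = ⁅b, a⁆ * (β b a : G)) := by
  classical
  set V := G ⧸ Subgroup.center G with hV
  have hcomm : ∀ x y : V, x * y = y * x := by
    intro x y
    induction x using QuotientGroup.induction_on with | H a =>
    induction y using QuotientGroup.induction_on with | H b =>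
    rw [← QuotientGroup.mk_mul, ← QuotientGroup.mk_mul, QuotientGroup.eq]
    have h : (a * b)⁻¹ * (b * a) = ⁅b⁻¹, a⁻¹⁆ := by group
    rw [h]; exact hG _ _
  -- the commutator pairing on the quotient
  let ω : V → V → Subgroup.center G := fun x y => ⟨⁅y.out, x.out⁆, hG _ _⟩
  have memout : ∀ (a : G), a⁻¹ * ((a : V).out) ∈ Subgroup.center G := by
    intro a
    exact QuotientGroup.eq.mp (QuotientGroup.out_eq' (a : V)).symm
  have ωmk : ∀ a b : G, ω (a : V) (b : V) = ⟨⁅b, a⁆, hG b a⟩ := by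
    intro a b
    apply Subtype.ext
    show ⁅((b : V)).out, ((a : V)).out⁆ = ⁅b, a⁆
    exact (comm_well (memout b) (memout a)).symm
  have ωmul1 : ∀ x y z : V, ω (x * y) z = ω x z * ω y z := by
    intro x y z
    apply Subtype.ext
    show ⁅z.out, (x * y).out⁆ = ⁅z.out, x.out⁆ * ⁅z.out, y.out⁆
    have h1 : ⁅z.out, (x * y).out⁆ = ⁅z.out, x.out * y.out⁆ := by
      refine comm_well (by simpa using (one_mem (Subgroup.center G))) ?_
      refine QuotientGroup.eq.mp ?_
      rw [QuotientGroup.mk_mul, QuotientGroup.out_eq', QuotientGroup.out_eq',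
        QuotientGroup.out_eq']
    rw [h1, comm_mul_second hG]
  have ωmul2 : ∀ x y z : V, ω x (y * z) = ω x y * ω x z := by
    intro x y z
    apply Subtype.ext
    show ⁅(y * z).out, x.out⁆ = ⁅y.out, x.out⁆ * ⁅z.out, x.out⁆
    have h1 : ⁅(y * z).out, x.out⁆ = ⁅y.out * z.out, x.out⁆ := by
      refine comm_well ?_ (by simpa using (one_mem (Subgroup.center G)))
      refine QuotientGroup.eq.mp ?_
      rw [QuotientGroup.mk_mul, QuotientGroup.out_eq', QuotientGroup.out_eq',
        QuotientGroup.out_eq']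
    rw [h1, comm_mul_first hG]
  have ωanti : ∀ x y : V, (ω x y)⁻¹ = ω y x := by
    intro x y
    apply Subtype.ext
    exact commutatorElement_inv _ _
  have ωself : ∀ x : V, ω x x = 1 := by
    intro x
    apply Subtype.ext
    exact commutatorElement_self _
  obtain ⟨P, Pmul1, Pmul2, Panti⟩ := exists_pairing hcomm ω ωmul1 ωmul2 ωanti ωself
  have mk_mul : ∀ a b : G, ((a * b : G) : V) = (a : V) * (b : V) := fun a b => rfl
  refine ⟨fun a b => P (a : V) (b : V), ?_, ?_, ?_, ?_, ?_⟩
  · intro a b c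
    show P ((a * b : G) : V) (c : V) = _
    rw [mk_mul, Pmul1]
  · intro a b c
    show P (a : V) ((b * c : G) : V) = _
    rw [mk_mul, Pmul2]
  · intro a b ha
    show P (a : V) (b : V) = 1
    have h1 : (a : V) = ((1 : G) : V) := by
      refine QuotientGroup.eq.mpr ?_
      simpa using inv_mem ha
    rw [h1]
    have h2 := Pmul1 ((1 : G) : V) ((1 : G) : V) (b : V)
    rw [← mk_mul, one_mul] at h2
    exact left_eq_mul.mp h2
  · intro a b hb
    show P (a : V) (b : V) = 1
    have h1 : (b : V) = ((1 : G) : V) := by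
      refine QuotientGroup.eq.mpr ?_
      simpa using inv_mem hb
    rw [h1]
    have h2 := Pmul2 (a : V) ((1 : G) : V) ((1 : G) : V)
    rw [← mk_mul, one_mul] at h2
    exact left_eq_mul.mp h2
  · intro a b
    show (P (a : V) (b : V) : G) = ⁅b, a⁆ * (P (b : V) (a : V) : G)
    rw [Panti, ωmk]
    rfl

end Beta

/-- A finite group is an IYB-group iff it is the multiplicative group of a left
brace, i.e. there is an abelian group operation `+` on `G` with
`a(b + c) = ab − a + ac`. -/
def IsIYB (G : Type*) [Group G] : Prop :=
  ∃ (add : G → G → G) (neg : G → G) (zero : G),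
    (∀ a b, add a b = add b a) ∧
    (∀ a b c, add (add a b) c = add a (add b c)) ∧
    (∀ a, add zero a = a) ∧
    (∀ a, add (neg a) a = zero) ∧
    (∀ a b c : G, a * add b c = add (add (a * b) (neg a)) (a * c))

/-- every finite nilpotent group of nilpotency class at most `2`
admits a left brace structure, i.e. is an IYB-group. -/
theorem nilpotent_class_two_isIYB
    {G : Type*} [Group G] [Finite G] (hnil : Group.IsNilpotent G)
    (hclass : (⊤ : Subgroup G).lowerCentralSeries 2 = ⊥) :
    IsIYB G := by
  -- commutators are central
  have hG : ∀ a b : G, ⁅a, b⁆ ∈ Subgroup.center G := by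
    intro a b
    rw [Subgroup.mem_center_iff]
    intro g
    have h1 : ⁅a, b⁆ ∈ (⊤ : Subgroup G).lowerCentralSeries 1 := by
      rw [Subgroup.top_lowerCentralSeries_one]
      exact Subgroup.commutator_mem_commutator (Subgroup.mem_top a) (Subgroup.mem_top b)
    have h2 : ⁅⁅a, b⁆, g⁆ ∈ (⊤ : Subgroup G).lowerCentralSeries 2 := by
      rw [Subgroup.lowerCentralSeries_succ]
      exact Subgroup.commutator_mem_commutator h1 (Subgroup.mem_top g)
    rw [hclass, Subgroup.mem_bot] at h2
    exact (commutatorElement_eq_one_iff_mul_comm.mp h2).symm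
  obtain ⟨β, hm1, hm2, hz1, hz2, hanti⟩ := exists_beta hG
  have hcen : ∀ (z : Subgroup.center G) (g : G), g * (z : G) = (z : G) * g :=
    fun z g => Subgroup.mem_center_iff.mp z.2 g
  have step : ∀ (g h : G) (z : Subgroup.center G), g * (z : G) * h = g * h * (z : G) := by
    intro g h z
    rw [mul_assoc, ← hcen z h, ← mul_assoc]
  have hinv1 : ∀ a b : G, β a⁻¹ b = (β a b)⁻¹ := by
    intro a b
    have h := hm1 a⁻¹ a b
    rw [inv_mul_cancel, hz1 1 b (one_mem _)] at h
    exact (eq_inv_of_mul_eq_one_left h.symm)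
  have hinv2 : ∀ a b : G, β a b⁻¹ = (β a b)⁻¹ := by
    intro a b
    have h := hm2 a b⁻¹ b
    rw [inv_mul_cancel, hz2 a 1 (one_mem _)] at h
    exact (eq_inv_of_mul_eq_one_left h.symm)
  refine ⟨fun a b => a * b * (β a b : G), fun a => a⁻¹ * (β a a : G), 1, ?_, ?_, ?_, ?_, ?_⟩
  · -- commutativity
    intro a b
    show a * b * (β a b : G) = b * a * (β b a : G)
    rw [hanti a b, ← mul_assoc]
    congr 1
    calc a * b * ⁅b, a⁆ = ⁅b, a⁆ * (a * b) := Subgroup.mem_center_iff.mp (hG b a) (a * b)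
      _ = b * a := by group
  · -- associativity
    intro a b c
    show a * b * (β a b : G) * c * (β (a * b * (β a b : G)) c : G) =
      a * (b * c * (β b c : G)) * (β a (b * c * (β b c : G)) : G)
    rw [hm1 (a * b) _ c, hz1 _ c (β a b).2, mul_one, hm1 a b c,
      hm2 a (b * c) ((β b c : G)), hz2 a _ (β b c).2, mul_one, hm2 a b c]
    rw [step (a * b) c (β a b), mul_assoc (a * b * c), ← Subgroup.coe_mul,
      ← mul_assoc a (b * c), mul_assoc (a * (b * c)), ← Subgroup.coe_mul,
      ← mul_assoc a b c]
    congr 1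
    have hC : β a b * (β a c * β b c) = β b c * (β a b * β a c) := by
      apply Additive.ofMul.injective
      simp only [ofMul_mul, ofMul_inv]
      abel
    exact congrArg _ hC
  · -- zero
    intro a
    show 1 * a * (β 1 a : G) = a
    rw [hz1 1 a (one_mem _)]
    simp
  · -- neg
    intro a
    show a⁻¹ * (β a a : G) * a * (β (a⁻¹ * (β a a : G)) a : G) = 1
    rw [hm1, hinv1, hz1 _ a (β a a).2, mul_one, step a⁻¹ a (β a a), inv_mul_cancel]
    simp [← Subgroup.coe_mul]
  · -- brace relation
    intro a b c
    show a * (b * c * (β b c : G)) =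
      a * b * (a⁻¹ * (β a a : G)) * (β (a * b) (a⁻¹ * (β a a : G)) : G) * (a * c) *
        (β (a * b * (a⁻¹ * (β a a : G)) * (β (a * b) (a⁻¹ * (β a a : G)) : G)) (a * c) : G)
    have hco1 : ∀ (z : Subgroup.center G) (w : G), β (z : G) w = 1 := fun z w => hz1 _ _ z.2
    have hco2 : ∀ (w : G) (z : Subgroup.center G), β w (z : G) = 1 := fun w z => hz2 _ _ z.2
    simp only [hm1, hm2, hinv1, hinv2, hco1, hco2, mul_one, one_mul]
    rw [← mul_assoc (a * b) a⁻¹, mul_assoc (a * b * a⁻¹), ← Subgroup.coe_mul,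
      step (a * b * a⁻¹) (a * c), mul_assoc (a * b * a⁻¹ * (a * c)), ← Subgroup.coe_mul]
    have hg : a * b * a⁻¹ * (a * c) = a * (b * c) := by group
    rw [hg, ← mul_assoc a (b * c)]
    congr 1
    have hC : β b c = β a a * ((β a a)⁻¹ * (β b a)⁻¹) *
        (β a a * β a c * (β b a * β b c) * ((β a a)⁻¹ * (β a c)⁻¹)) := by
      apply Additive.ofMul.injective
      simp only [ofMul_mul, ofMul_inv]
      abel
    exact congrArg _ hC
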